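/- Let a : ℝ → ℝ be continuous and T-periodic with nonzero average ā, and let ζ be the unique T-periodic solution of ζ' = -ζ·a - 1. If ā > 0 then ζ(t) < 0 for all t ∈ ℝ, and if ā < 0 then ζ(t) > 0 for all t ∈ ℝ. In particular ζ never vanishes. -/

import Mathlib

/-- The unique T-periodic solution of ζ' = -ζ·a - 1 is negative when the average
of `a` is positive, positive when it is negative; in particular it never vanishes. -/
theorem stmt_1 (T : ℝ) (hT : 0 < T) (a : ℝ → ℝ) (ha : Continuous a)
    (haper : ∀ t, a (t + T) = a t)
    (abar : ℝ) (habar : abar = (1 / T) * ∫ t in (0:ℝ)..T, a t) (habar0 : abar ≠ 0)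
    (ζ : ℝ → ℝ)
    (hζ : ∀ t, HasDerivAt ζ (-(ζ t) * a t - 1) t)
    (hζper : ∀ t, ζ (t + T) = ζ t) :
    (0 < abar → ∀ t, ζ t < 0) ∧ (abar < 0 → ∀ t, 0 < ζ t) ∧ (∀ t, ζ t ≠ 0) := by
  set A : ℝ → ℝ := fun t => ∫ s in (0:ℝ)..t, a s with hAdef
  have hA : ∀ t, HasDerivAt A (a t) t := by
    intro t
    exact intervalIntegral.integral_hasDerivAt_right (ha.intervalIntegrable _ _)
      (ha.stronglyMeasurableAtFilter _ _) ha.continuousAt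
  have hAcont : Continuous A := by
    apply continuous_iff_continuousAt.mpr
    exact fun t => (hA t).continuousAt
  have hEcont : Continuous fun s => Real.exp (A s) := Real.continuous_exp.comp hAcont
  have hg : ∀ t, HasDerivAt (fun t => ζ t * Real.exp (A t)) (-Real.exp (A t)) t := by
    intro t
    have h := (hζ t).fun_mul ((hA t).exp)
    exact h.congr_deriv (by ring)
  have hkey : ∀ t, ζ t * Real.exp (A t) = ζ 0 - ∫ s in (0:ℝ)..t, Real.exp (A s) := by
    intro t
    have h1 := intervalIntegral.integral_eq_sub_of_hasDerivAt (fun x _ => hg x)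
      ((hEcont.neg).intervalIntegrable 0 t)
    have hA0 : A 0 = 0 := intervalIntegral.integral_same
    rw [intervalIntegral.integral_neg, hA0, Real.exp_zero, mul_one] at h1
    linarith
  have hAT : A T = T * abar := by
    rw [habar, hAdef]
    field_simp
  have hIpos : 0 < ∫ s in (0:ℝ)..T, Real.exp (A s) :=
    intervalIntegral.intervalIntegral_pos_of_pos_on (hEcont.intervalIntegrable _ _)
      (fun x _ => Real.exp_pos _) hT
  have hzT : ζ T = ζ 0 := by simpa using hζper 0
  have heq : ζ 0 * (Real.exp (T * abar) - 1) = -(∫ s in (0:ℝ)..T, Real.exp (A s)) := by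
    have h := hkey T
    rw [hAT, hzT] at h
    rw [mul_sub, mul_one]
    linarith
  have hper : ∀ (n : ℕ) (t : ℝ), ζ (t + n * T) = ζ t := by
    intro n
    induction n with
    | zero => simp
    | succ n ih =>
      intro t
      have h : t + ((n : ℝ) + 1) * T = (t + T) + n * T := by ring
      push_cast
      rw [h, ih (t + T), hζper t]
  have hpos_case : 0 < abar → ∀ t, ζ t < 0 := by
    intro hp
    have he : 1 < Real.exp (T * abar) := by
      rw [show (1:ℝ) = Real.exp 0 by simp]
      exact Real.exp_lt_exp.mpr (by positivity)
    have hz0 : ζ 0 < 0 := by nlinarith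
    have hnn : ∀ t, 0 ≤ t → ζ t < 0 := by
      intro t ht
      have hI : 0 ≤ ∫ s in (0:ℝ)..t, Real.exp (A s) :=
        intervalIntegral.integral_nonneg ht (fun x _ => (Real.exp_pos _).le)
      have h1 : ζ t * Real.exp (A t) < 0 := by rw [hkey t]; linarith
      nlinarith [Real.exp_pos (A t)]
    intro t
    obtain ⟨n, hn⟩ := exists_nat_ge (-t / T)
    have ht' : 0 ≤ t + n * T := by
      have := (div_le_iff₀ hT).mp hn
      linarith
    have h := hnn (t + n * T) ht'
    rwa [hper n t] at h
  have hneg_case : abar < 0 → ∀ t, 0 < ζ t := by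
    intro hp
    have he : Real.exp (T * abar) < 1 := by
      rw [show (1:ℝ) = Real.exp 0 by simp]
      exact Real.exp_lt_exp.mpr (by nlinarith)
    have hz0 : 0 < ζ 0 := by nlinarith
    have hnn : ∀ t, t ≤ 0 → 0 < ζ t := by
      intro t ht
      have hI : 0 ≤ ∫ s in t..(0:ℝ), Real.exp (A s) :=
        intervalIntegral.integral_nonneg ht (fun x _ => (Real.exp_pos _).le)
      have hI' : ∫ s in (0:ℝ)..t, Real.exp (A s) ≤ 0 := by
        rw [intervalIntegral.integral_symm]; linarith
      have h1 : 0 < ζ t * Real.exp (A t) := by rw [hkey t]; linarith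
      nlinarith [Real.exp_pos (A t)]
    intro t
    obtain ⟨n, hn⟩ := exists_nat_ge (t / T)
    have ht' : t - n * T ≤ 0 := by
      have := (div_le_iff₀ hT).mp hn
      linarith
    have h := hnn (t - n * T) ht'
    have h2 := hper n (t - n * T)
    rw [sub_add_cancel] at h2
    rw [h2]; exact h
  refine ⟨hpos_case, hneg_case, fun t => ?_⟩
  rcases habar0.lt_or_gt with h | h
  · exact (hneg_case h t).ne'
  · exact (hpos_case h t).ne
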